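/- Let π be a permutation of {0,1,2,3,4,5} that is a cycle of length 4 (i.e. π is a cycle whose support has exactly 4 elements), and let ε : {0,…,5} → ℚ be a function with ε(j) ∈ {1, −1} for all j. Let P be the 6×6 rational matrix with entries P(i, j) = ε(j) if i = π(j) and P(i, j) = 0 otherwise (a signed permutation matrix over π). Then P⁴ ≠ diag(−1, −1, −1, −1, −1, 1). -/

import Mathlib

open scoped Matrix


/-- Let `π` be a permutation of `{0,…,5}` that is a cycle whose support has exactly four
elements, and let `ε` take values in `{1, −1}`.  Then the fourth power of the signed
permutation matrix `P(i,j) = ε(j)` if `i = π(j)`, `0` otherwise, is never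
`diag(−1,−1,−1,−1,−1,1)`. -/
theorem signed_four_cycle_fourth_power_ne (π : Equiv.Perm (Fin 6))
    (hcyc : π.IsCycle) (hsupp : π.support.card = 4)
    (ε : Fin 6 → ℚ) (hε : ∀ j, ε j = 1 ∨ ε j = -1) :
    (Matrix.of fun i j => if i = π j then ε j else 0 : Matrix (Fin 6) (Fin 6) ℚ) ^ 4
      ≠ Matrix.diagonal ![-1, -1, -1, -1, -1, 1] := by
  -- find a fixed point j ≠ 5
  have hcard : 1 < π.supportᶜ.card := by
    have := Finset.card_compl π.support
    simp [hsupp] at this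
    omega
  obtain ⟨j, hjmem, hj5⟩ := Finset.exists_mem_ne hcard 5
  have hfix : π j = j := by
    have := Finset.mem_compl.mp hjmem
    simpa [Equiv.Perm.mem_support, not_not] using this
  set P : Matrix (Fin 6) (Fin 6) ℚ :=
    Matrix.of fun i j => if i = π j then ε j else 0 with hP
  have hmv : P *ᵥ Pi.single j 1 = (ε j) • (Pi.single j 1 : Fin 6 → ℚ) := by
    funext i
    simp only [Matrix.mulVec_single, hP, Matrix.of_apply, hfix, Pi.smul_apply,
      Pi.single_apply, smul_eq_mul]
    by_cases h : i = j <;> simp [h, hfix]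
  intro h
  have key : (P ^ 4 *ᵥ Pi.single j (1:ℚ)) j
      = (Matrix.diagonal ![-1, -1, -1, -1, -1, 1] *ᵥ Pi.single j (1:ℚ)) j := by rw [h]
  have hpow : P ^ 4 *ᵥ Pi.single j (1:ℚ) = (ε j)^4 • (Pi.single j 1 : Fin 6 → ℚ) := by
    have h4 : P ^ 4 = P * (P * (P * P)) := by
      rw [pow_succ, pow_succ, pow_succ, pow_one]; noncomm_ring
    rw [h4, ← Matrix.mulVec_mulVec, ← Matrix.mulVec_mulVec, ← Matrix.mulVec_mulVec]
    simp only [hmv, Matrix.mulVec_smul, smul_smul]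
    ring_nf
  have he4 : (ε j)^4 = 1 := by rcases hε j with h' | h' <;> rw [h'] <;> norm_num
  rw [hpow, he4] at key
  simp only [one_smul, Pi.single_apply, if_pos rfl] at key
  have hdiag : (Matrix.diagonal ![-1, -1, -1, -1, -1, 1] *ᵥ Pi.single j (1:ℚ)) j
      = ![-1, -1, -1, -1, -1, (1:ℚ)] j := by
    simp [Matrix.mulVec_diagonal]
  rw [hdiag] at key
  clear hmv hpow h hfix hjmem hP he4 hcard hcyc hsupp hε
  fin_cases j <;> norm_num at key <;> exact hj5 rfl
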